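/- Every selective subset M of (G,C) contains at least one vertex from each block: for every block B of (G,C), M ∩ B ≠ ∅. -/

import Mathlib

/-- The set of nearest neighbors of `v` in `U` with respect to hop-distance in `G`:
`N̂(v,U) = {u ∈ U : d(v,u) = min_{w ∈ U} d(v,w)}` (empty if `U` is empty). -/
def NearestSet {V : Type*} (G : SimpleGraph V) (v : V) (U : Set V) : Set V :=
  {u | u ∈ U ∧ ∀ w ∈ U, G.dist v u ≤ G.dist v w}

/-- `S` is a selective subset of `(G, C)`: every vertex `v` has, among its nearest
neighbors in `S ∪ (V ∖ V_{C v})`, at least one vertex of its own color. -/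
def IsSelective {V α : Type*} (G : SimpleGraph V) (C : V → α) (S : Set V) : Prop :=
  ∀ v : V, ∃ u ∈ NearestSet G v (S ∪ {w | C w ≠ C v}), C u = C v

/-- The subgraph of `G` keeping only edges between vertices of the same color. -/
def sameColorGraph {V α : Type*} (G : SimpleGraph V) (C : V → α) : SimpleGraph V where
  Adj u w := G.Adj u w ∧ C u = C w
  symm := ⟨fun _ _ h => ⟨h.1.symm, h.2.symm⟩⟩
  loopless := ⟨fun u h => G.loopless.irrefl u h.1⟩

/-- A block of `(G, C)` is a maximal monochromatic connected set of vertices, i.e. a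
connected component of the subgraph induced by one color class. -/
def IsBlock {V α : Type*} (G : SimpleGraph V) (C : V → α) (B : Set V) : Prop :=
  ∃ v : V, B = {u | (sameColorGraph G C).Reachable u v}

lemma lift_reachable {V α : Type*} {G : SimpleGraph V} {C : V → α} {k : α} :
    ∀ {a b : V} (p : G.Walk a b), (∀ w ∈ p.support, C w = k) →
      (sameColorGraph G C).Reachable a b := by
  intro a b p
  induction p with
  | nil => intro _; rfl
  | @cons a c b h p ih =>
    intro hcol
    have hca : C a = k := hcol a (by simp)
    have hcc : C c = k := hcol c (by simp)
    refine (SimpleGraph.Adj.reachable (show (sameColorGraph G C).Adj a c from ⟨h, hca.trans hcc.symm⟩)).trans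
      (ih fun w hw => hcol w (by simp [hw]))

/-- Every selective subset `M` of `(G,C)` contains at least one vertex from each block. -/
theorem stmt_2 {V : Type*} [Fintype V] {c : ℕ} (G : SimpleGraph V) (hconn : G.Connected)
    (C : V → Fin c) (M : Set V) (hM : IsSelective G C M) :
    ∀ B : Set V, IsBlock G C B → (M ∩ B).Nonempty := by
  classical
  intro B hB
  obtain ⟨v, rfl⟩ := hB
  obtain ⟨u, ⟨huU, hmin⟩, hcu⟩ := hM v
  have huM : u ∈ M := by
    rcases huU with h | h
    · exact h
    · exact absurd hcu h
  obtain ⟨p, hp⟩ := hconn.exists_walk_length_eq_dist v u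
  have hcol : ∀ w ∈ p.support, C w = C v := by
    intro w hw
    by_contra hne
    have hle : G.dist v u ≤ G.dist v w := hmin w (Or.inr hne)
    have hwu : w ≠ u := fun e => hne (e ▸ hcu)
    have hsplit := congr_arg SimpleGraph.Walk.length (p.take_spec hw)
    rw [SimpleGraph.Walk.length_append] at hsplit
    have hdrop : 1 ≤ (p.dropUntil w hw).length := by
      rcases Nat.eq_zero_or_pos (p.dropUntil w hw).length with h0 | h0
      · exact absurd (SimpleGraph.Walk.eq_of_length_eq_zero h0) hwu
      · exact h0
    have h1 : G.dist v w ≤ (p.takeUntil w hw).length :=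
      SimpleGraph.dist_le _
    omega
  have hreach : (sameColorGraph G C).Reachable v u := lift_reachable p hcol
  exact ⟨u, huM, hreach.symm⟩
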